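/- arXiv:1708.00905 — 3 statements merged into one kernel-verified Lean document; each statement's English description precedes it below -/
import Mathlib

section
/- The function f(x) = (1+x)^(−1/x) is monotonically increasing on (0, ∞). -/
theorem f_strictMonoOn :
    StrictMonoOn (fun x : ℝ => Real.exp (-Real.log (1 + x) / x)) (Set.Ioi 0) := by
  have key : StrictMonoOn (fun x : ℝ => -Real.log (1 + x) / x) (Set.Ioi 0) := by
    apply strictMonoOn_of_deriv_pos (convex_Ioi 0)
    · apply ContinuousOn.div
      · exact (Real.continuousOn_log.comp (continuous_const.add continuous_id).continuousOn
          (fun x hx => by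
            have : (0:ℝ) < x := hx
            simp only [Set.mem_compl_iff, Set.mem_singleton_iff]
            intro h; simp only [Pi.add_apply, id] at h; linarith)).neg
      · exact continuousOn_id
      · intro x hx; exact ne_of_gt hx
    · intro x hx
      rw [interior_Ioi] at hx
      have hx0 : (0:ℝ) < x := hx
      have h1x : (0:ℝ) < 1 + x := by linarith
      have hd : HasDerivAt (fun x : ℝ => -Real.log (1 + x) / x)
          ((-(1/(1+x)) * x - (-Real.log (1+x)) * 1) / x ^ 2) x := by
        have hlog : HasDerivAt (fun x : ℝ => Real.log (1 + x)) (1/(1+x)) x := by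
          have := (Real.hasDerivAt_log (ne_of_gt h1x)).comp x
            ((hasDerivAt_id x).const_add 1)
          rw [one_div]; exact this.congr_deriv (mul_one _)
        exact (hlog.neg).div (hasDerivAt_id x) (ne_of_gt hx0)
      rw [hd.deriv]
      have hkey : x / (1 + x) < Real.log (1 + x) := by
        have := Real.log_lt_sub_one_of_pos (x := 1/(1+x)) (by positivity)
          (by intro h; field_simp at h; linarith)
        rw [Real.log_div one_ne_zero (ne_of_gt h1x), Real.log_one] at this
        have : -Real.log (1+x) < 1/(1+x) - 1 := by simpa using this
        have h2 : 1 - 1/(1+x) < Real.log (1+x) := by linarith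
        have h3 : 1 - 1/(1+x) = x/(1+x) := by field_simp; ring
        linarith [h3 ▸ h2]
      have hnum : 0 < -(1/(1+x)) * x - (-Real.log (1+x)) * 1 := by
        have : x / (1+x) = 1/(1+x) * x := by ring
        nlinarith [hkey]
      positivity
  intro a ha b hb hab
  exact Real.exp_lt_exp.mpr (key ha hb hab)
end

section
/- Let c₁, c₂ be constants with 0 < c₁ < c₂ and let w ∈ (0,1). Define ξ(τ) = (1−w)·(1 − e^(−c₁/(τ−s))·K) + w·e^(−c₂/(τ−s))·K for τ > s, where K > 0. Then ξ'(τ) = 0 at exactly one point τ‡ = (c₂−c₁)/ln((w/(1−w))·(c₂/c₁)) + s, provided (w/(1−w))·(c₂/c₁) > 1; moreover ξ'(τ) < 0 for τ < τ‡ and ξ'(τ) > 0 for τ > τ‡, so τ‡ is the unique minimizer of ξ on (s, ∞). -/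
theorem unique_minimizer (s K c₁ c₂ w : ℝ) (hK : 0 < K)
    (hc₁ : 0 < c₁) (hc : c₁ < c₂) (hw : w ∈ Set.Ioo (0 : ℝ) 1)
    (hcond : 1 < w / (1 - w) * (c₂ / c₁))
    (ξ : ℝ → ℝ)
    (hξ : ∀ τ : ℝ, ξ τ = (1 - w) * (1 - Real.exp (-c₁ / (τ - s)) * K) +
      w * Real.exp (-c₂ / (τ - s)) * K)
    (τd : ℝ) (hτd : τd = (c₂ - c₁) / Real.log (w / (1 - w) * (c₂ / c₁)) + s) :
    (∀ τ ∈ Set.Ioi s, deriv ξ τ = 0 ↔ τ = τd) ∧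
    (∀ τ ∈ Set.Ioo s τd, deriv ξ τ < 0) ∧
    (∀ τ ∈ Set.Ioi τd, 0 < deriv ξ τ) ∧
    (∀ τ ∈ Set.Ioi s, τ ≠ τd → ξ τd < ξ τ) := by
  obtain ⟨hw0, hw1⟩ := hw
  have hw1' : (0:ℝ) < 1 - w := by linarith
  have hc₂ : 0 < c₂ := lt_trans hc₁ hc
  have hLpos : 0 < Real.log (w / (1 - w) * (c₂ / c₁)) := Real.log_pos hcond
  set L := Real.log (w / (1 - w) * (c₂ / c₁)) with hLdef
  have hτds : s < τd := by
    have : 0 < (c₂ - c₁) / L := div_pos (by linarith) hLpos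
    rw [hτd]; linarith
  have hLeq : L = Real.log (w * c₂) - Real.log ((1 - w) * c₁) := by
    rw [hLdef]
    rw [show w / (1 - w) * (c₂ / c₁) = (w * c₂) / ((1 - w) * c₁) by
      field_simp]
    exact Real.log_div (by positivity) (by positivity)
  -- rewrite main quantities as exponentials
  have hA : ∀ τ : ℝ, w * c₂ * Real.exp (-c₂ / (τ - s))
      = Real.exp (Real.log (w * c₂) + (-c₂ / (τ - s))) := by
    intro τ; rw [Real.exp_add, Real.exp_log (by positivity)]
  have hB : ∀ τ : ℝ, (1 - w) * c₁ * Real.exp (-c₁ / (τ - s))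
      = Real.exp (Real.log ((1 - w) * c₁) + (-c₁ / (τ - s))) := by
    intro τ; rw [Real.exp_add, Real.exp_log (by positivity)]
  -- sign analysis
  have hxy : ∀ τ : ℝ, s < τ →
      (w * c₂ * Real.exp (-c₂ / (τ - s)) < (1 - w) * c₁ * Real.exp (-c₁ / (τ - s)) ↔ τ < τd) := by
    intro τ hτ
    have ht : 0 < τ - s := sub_pos.2 hτ
    rw [hA, hB, Real.exp_lt_exp]
    constructor
    · intro h
      have h1 : L < (c₂ - c₁) / (τ - s) := by
        rw [hLeq]
        have : -c₂ / (τ - s) - (-c₁ / (τ - s)) = -((c₂ - c₁) / (τ - s)) := by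
          field_simp; ring
        nlinarith [this]
      have h2 : L * (τ - s) < c₂ - c₁ := by
        have := (lt_div_iff₀ ht).mp h1; linarith
      have h3 : τ - s < (c₂ - c₁) / L := (lt_div_iff₀' hLpos).mpr h2
      rw [hτd]; linarith
    · intro h
      have h3 : τ - s < (c₂ - c₁) / L := by rw [hτd] at h; linarith
      have h2 : L * (τ - s) < c₂ - c₁ := (lt_div_iff₀' hLpos).mp h3
      have h1 : L < (c₂ - c₁) / (τ - s) := (lt_div_iff₀ ht).mpr (by linarith)
      rw [hLeq] at h1
      have hsplit : (c₂ - c₁) / (τ - s) = c₂ / (τ - s) - c₁ / (τ - s) := by ring_nf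
      rw [hsplit] at h1
      have e1 : -c₂ / (τ - s) = -(c₂ / (τ - s)) := by ring
      have e2 : -c₁ / (τ - s) = -(c₁ / (τ - s)) := by ring
      nlinarith [e1, e2]
  have hyx : ∀ τ : ℝ, s < τ →
      ((1 - w) * c₁ * Real.exp (-c₁ / (τ - s)) < w * c₂ * Real.exp (-c₂ / (τ - s)) ↔ τd < τ) := by
    intro τ hτ
    have ht : 0 < τ - s := sub_pos.2 hτ
    rw [hA, hB, Real.exp_lt_exp]
    have hsplit : (c₂ - c₁) / (τ - s) = c₂ / (τ - s) - c₁ / (τ - s) := by ring_nf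
    constructor
    · intro h
      have h1 : (c₂ - c₁) / (τ - s) < L := by
        rw [hLeq]; rw [hsplit]
        have e1 : -c₂ / (τ - s) = -(c₂ / (τ - s)) := by ring
        have e2 : -c₁ / (τ - s) = -(c₁ / (τ - s)) := by ring
        nlinarith [e1, e2]
      have h2 : c₂ - c₁ < L * (τ - s) := by
        have := (div_lt_iff₀ ht).mp h1; linarith
      have h3 : (c₂ - c₁) / L < τ - s := (div_lt_iff₀' hLpos).mpr h2
      rw [hτd]; linarith
    · intro h
      have h3 : (c₂ - c₁) / L < τ - s := by rw [hτd] at h; linarith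
      have h2 : c₂ - c₁ < L * (τ - s) := (div_lt_iff₀' hLpos).mp h3
      have h1 : (c₂ - c₁) / (τ - s) < L := (div_lt_iff₀ ht).mpr (by linarith)
      rw [hLeq, hsplit] at h1
      have e1 : -c₂ / (τ - s) = -(c₂ / (τ - s)) := by ring
      have e2 : -c₁ / (τ - s) = -(c₁ / (τ - s)) := by ring
      nlinarith [e1, e2]
  -- derivative
  have hderiv : ∀ τ : ℝ, s < τ → HasDerivAt ξ
      (K / (τ - s) ^ 2 * (w * c₂ * Real.exp (-c₂ / (τ - s))
        - (1 - w) * c₁ * Real.exp (-c₁ / (τ - s)))) τ := by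
    intro τ hτ
    have ht : τ - s ≠ 0 := ne_of_gt (sub_pos.2 hτ)
    have hbase : HasDerivAt (fun x : ℝ => x - s) 1 τ := (hasDerivAt_id τ).sub_const s
    have hinv : HasDerivAt (fun x : ℝ => (x - s)⁻¹) (-1 / (τ - s) ^ 2) τ := by
      exact hbase.inv ht
    have hexp : ∀ c : ℝ, HasDerivAt (fun x : ℝ => Real.exp (-c / (x - s)))
        (Real.exp (-c / (τ - s)) * (c / (τ - s) ^ 2)) τ := by
      intro c
      have h1 : HasDerivAt (fun x : ℝ => -c / (x - s)) (c / (τ - s) ^ 2) τ := by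
        have := hinv.const_mul (-c)
        simpa [div_eq_mul_inv, mul_comm, mul_assoc, mul_left_comm] using this
      simpa using h1.exp
    have hsum : HasDerivAt (fun x : ℝ => (1 - w) * (1 - Real.exp (-c₁ / (x - s)) * K) +
        w * Real.exp (-c₂ / (x - s)) * K)
        ((1 - w) * (0 - Real.exp (-c₁ / (τ - s)) * (c₁ / (τ - s) ^ 2) * K) +
          w * (Real.exp (-c₂ / (τ - s)) * (c₂ / (τ - s) ^ 2)) * K) τ := by
      exact (((hasDerivAt_const τ (1:ℝ)).sub ((hexp c₁).mul_const K)).const_mul (1 - w)).add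
        (((hexp c₂).const_mul w).mul_const K)
    have hfun : (fun x : ℝ => (1 - w) * (1 - Real.exp (-c₁ / (x - s)) * K) +
        w * Real.exp (-c₂ / (x - s)) * K) = ξ := by
      funext x; rw [hξ x]
    rw [hfun] at hsum
    convert hsum using 1
    field_simp
    ring
  have hderiv_eq : ∀ τ : ℝ, s < τ → deriv ξ τ
      = K / (τ - s) ^ 2 * (w * c₂ * Real.exp (-c₂ / (τ - s))
        - (1 - w) * c₁ * Real.exp (-c₁ / (τ - s))) := fun τ hτ => (hderiv τ hτ).deriv
  have hKt : ∀ τ : ℝ, s < τ → 0 < K / (τ - s) ^ 2 := by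
    intro τ hτ
    have : 0 < τ - s := sub_pos.2 hτ
    positivity
  have hneg : ∀ τ ∈ Set.Ioo s τd, deriv ξ τ < 0 := by
    intro τ hτ
    rw [hderiv_eq τ hτ.1]
    have := (hxy τ hτ.1).mpr hτ.2
    have hKpos := hKt τ hτ.1
    nlinarith
  have hpos : ∀ τ ∈ Set.Ioi τd, 0 < deriv ξ τ := by
    intro τ hτ
    have hτs : s < τ := lt_trans hτds hτ
    rw [hderiv_eq τ hτs]
    have := (hyx τ hτs).mpr hτ
    have hKpos := hKt τ hτs
    nlinarith
  have hzero : ∀ τ ∈ Set.Ioi s, deriv ξ τ = 0 ↔ τ = τd := by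
    intro τ hτ
    constructor
    · intro h
      by_contra hne
      rcases lt_or_gt_of_ne hne with hlt | hgt
      · exact absurd h (ne_of_lt (hneg τ ⟨hτ, hlt⟩))
      · exact absurd h (ne_of_gt (hpos τ hgt))
    · intro h
      subst h
      rw [hderiv_eq τ hτ]
      have h1 := (hxy τ hτ)
      have h2 := (hyx τ hτ)
      have e1 : ¬ (w * c₂ * Real.exp (-c₂ / (τ - s)) < (1 - w) * c₁ * Real.exp (-c₁ / (τ - s))) := by
        rw [h1]; exact lt_irrefl τ
      have e2 : ¬ ((1 - w) * c₁ * Real.exp (-c₁ / (τ - s)) < w * c₂ * Real.exp (-c₂ / (τ - s))) := by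
        rw [h2]; exact lt_irrefl τ
      have : w * c₂ * Real.exp (-c₂ / (τ - s)) = (1 - w) * c₁ * Real.exp (-c₁ / (τ - s)) :=
        le_antisymm (not_lt.mp e2) (not_lt.mp e1)
      rw [this]; ring
  refine ⟨hzero, hneg, hpos, ?_⟩
  have hcont : ContinuousOn ξ (Set.Ioi s) := fun τ hτ =>
    ((hderiv τ hτ).differentiableAt.continuousAt).continuousWithinAt
  have hanti : StrictAntiOn ξ (Set.Ioc s τd) := by
    apply strictAntiOn_of_deriv_neg (convex_Ioc s τd)
      (hcont.mono (fun x hx => hx.1))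
    intro x hx
    rw [interior_Ioc] at hx
    exact hneg x hx
  have hmono : StrictMonoOn ξ (Set.Ici τd) := by
    apply strictMonoOn_of_deriv_pos (convex_Ici τd)
      (hcont.mono (fun x hx => lt_of_lt_of_le hτds hx))
    intro x hx
    rw [interior_Ici] at hx
    exact hpos x hx
  intro τ hτ hne
  rcases lt_or_gt_of_ne hne with hlt | hgt
  · exact hanti ⟨hτ, le_of_lt hlt⟩ ⟨hτds, le_refl τd⟩ hlt
  · exact hmono (Set.self_mem_Ici) (le_of_lt hgt) hgt
end

section
/- For Q > 0 and positive constants φ, μ, σ², the product F(Q) = (1 − φμσ²/(φμσ² + (φμ+1)Q)) · (1 + (φμ+1)Q/(φμσ²))^(−φμσ²/((φμ+1)Q)) is strictly increasing in Q, tends to 0 as Q → 0⁺, and tends to 1 as Q → ∞. Consequently, for each ε ∈ (0, 1/2) there exists a unique Q^ε > 0 with F(Q^ε) = 2ε. -/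
open Real Filter Set Topology

noncomputable def Haux (t : ℝ) : ℝ := Real.log t - (1 + 1/t) * Real.log (1 + t)

lemma log_one_add_hasDerivAt {t : ℝ} (ht : -1 < t) :
    HasDerivAt (fun s : ℝ => Real.log (1 + s)) (1 + t)⁻¹ t := by
  have h : HasDerivAt (fun s : ℝ => 1 + s) 1 t := by
    simpa using (hasDerivAt_id t).const_add 1
  simpa [Function.comp_def] using (Real.hasDerivAt_log (by linarith : (1:ℝ) + t ≠ 0)).comp t h

lemma Haux_hasDerivAt {t : ℝ} (ht : 0 < t) :
    HasDerivAt Haux (Real.log (1 + t) / t ^ 2) t := by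
  have h1 : HasDerivAt Real.log t⁻¹ t := Real.hasDerivAt_log (ne_of_gt ht)
  have h2 : HasDerivAt (fun s : ℝ => 1 + 1/s) (-(t^2)⁻¹) t := by
    simpa [one_div] using ((hasDerivAt_inv (ne_of_gt ht)).const_add 1)
  have h3 := log_one_add_hasDerivAt (by linarith : (-1:ℝ) < t)
  have h : HasDerivAt Haux (t⁻¹ - (-(t ^ 2)⁻¹ * Real.log (1 + t) + (1 + 1 / t) * (1 + t)⁻¹)) t :=
    h1.sub (h2.mul h3)
  convert h using 1
  have h4 : (1:ℝ) + t ≠ 0 := by positivity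
  field_simp
  ring

lemma Haux_strictMonoOn : StrictMonoOn Haux (Ioi 0) := by
  apply strictMonoOn_of_deriv_pos (convex_Ioi 0)
  · exact fun t ht => (Haux_hasDerivAt ht).continuousAt.continuousWithinAt
  · intro t ht
    rw [interior_Ioi] at ht
    rw [(Haux_hasDerivAt ht).deriv]
    have ht' : 0 < t := mem_Ioi.1 ht
    have hl : 0 < Real.log (1 + t) := Real.log_pos (by linarith)
    positivity

lemma G_eq {t : ℝ} (ht : 0 < t) :
    t / (1 + t) * (1 + t) ^ (-1 / t : ℝ) = Real.exp (Haux t) := by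
  have h1 : (0:ℝ) < 1 + t := by linarith
  rw [Real.rpow_def_of_pos h1, Haux,
    show t / (1+t) = Real.exp (Real.log (t/(1+t))) from (Real.exp_log (by positivity)).symm,
    ← Real.exp_add, Real.log_div (ne_of_gt ht) (ne_of_gt h1)]
  congr 1
  field_simp
  ring

lemma Haux_tendsto_zero : Tendsto Haux (𝓝[>] (0:ℝ)) atBot := by
  have hslope : Tendsto (fun t : ℝ => Real.log (1 + t) / t) (𝓝[>] (0:ℝ)) (𝓝 1) := by
    have hd : HasDerivAt (fun s : ℝ => Real.log (1 + s)) 1 0 := by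
      simpa using log_one_add_hasDerivAt (by norm_num : (-1:ℝ) < 0)
    have := hasDerivAt_iff_tendsto_slope.1 hd
    have h2 : Tendsto (slope (fun s : ℝ => Real.log (1 + s)) 0) (𝓝[>] (0:ℝ)) (𝓝 1) :=
      this.mono_left (nhdsWithin_mono _ fun x hx => ne_of_gt hx)
    refine h2.congr fun t => ?_
    simp [slope_fun_def, div_eq_inv_mul]
  have hlog1 : Tendsto (fun t : ℝ => Real.log (1 + t)) (𝓝[>] (0:ℝ)) (𝓝 0) := by
    have : ContinuousAt (fun t : ℝ => Real.log (1 + t)) 0 :=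
      (log_one_add_hasDerivAt (by norm_num : (-1:ℝ) < 0)).continuousAt
    simpa using this.continuousWithinAt.tendsto
  have hsum : Tendsto (fun t : ℝ => (1 + 1/t) * Real.log (1 + t)) (𝓝[>] (0:ℝ)) (𝓝 1) := by
    have := hlog1.add hslope
    refine (by simpa using this : Tendsto (fun t : ℝ => Real.log (1+t) + Real.log (1+t)/t)
      (𝓝[>] (0:ℝ)) (𝓝 1)).congr' ?_
    filter_upwards [self_mem_nhdsWithin] with t (ht : 0 < t)
    field_simp
  have hlog : Tendsto Real.log (𝓝[>] (0:ℝ)) atBot := Real.tendsto_log_nhdsGT_zero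
  apply tendsto_atBot_mono' (𝓝[>] (0:ℝ)) _
    (tendsto_atBot_add_const_right _ (-(1/2)) hlog)
  filter_upwards [hsum.eventually (eventually_gt_nhds (by norm_num : (1:ℝ)/2 < 1))] with t ht
  simp only [Haux]
  linarith

lemma Haux_tendsto_atTop : Tendsto Haux atTop (𝓝 0) := by
  have h1 : Tendsto (fun t : ℝ => Real.log (1 + t) / t) atTop (𝓝 0) := by
    have h := (Real.tendsto_pow_log_div_mul_add_atTop 1 (-1) 1 one_ne_zero).comp
      (tendsto_atTop_add_const_left atTop (1:ℝ) tendsto_id)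
    refine h.congr' ?_
    filter_upwards [eventually_gt_atTop (0:ℝ)] with t ht
    simp only [Function.comp_apply, id_eq, pow_one]
    congr 1
    ring
  have h2 : Tendsto (fun t : ℝ => Real.log (t / (1 + t))) atTop (𝓝 0) := by
    have hq : Tendsto (fun t : ℝ => t / (1 + t)) atTop (𝓝 1) := by
      have := tendsto_inv_atTop_zero.comp (tendsto_atTop_add_const_left atTop (1:ℝ) tendsto_id)
      have h' : Tendsto (fun t : ℝ => 1 - (1 + t)⁻¹) atTop (𝓝 1) := by
        simpa using (tendsto_const_nhds (x := (1:ℝ))).sub this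
    -- rewrite t/(1+t) = 1 - (1+t)⁻¹ eventually
      refine h'.congr' ?_
      filter_upwards [eventually_gt_atTop (0:ℝ)] with t ht
      have : (1:ℝ) + t ≠ 0 := by positivity
      field_simp
      ring
    simpa [Function.comp_def] using (Real.continuousAt_log one_ne_zero).tendsto.comp hq
  have h := h2.sub h1
  rw [sub_zero] at h
  refine h.congr' ?_
  filter_upwards [eventually_gt_atTop (0:ℝ)] with t ht
  have h1t : (0:ℝ) < 1 + t := by linarith
  rw [Real.log_div (ne_of_gt ht) (ne_of_gt h1t), Haux]
  field_simp
  ring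

theorem F_props (φ μ σ : ℝ) (hφ : 0 < φ) (hμ : 0 < μ) (hσ : 0 < σ)
    (F : ℝ → ℝ)
    (hF : ∀ Q : ℝ, F Q = (1 - φ * μ * σ / (φ * μ * σ + (φ * μ + 1) * Q)) *
      (1 + (φ * μ + 1) * Q / (φ * μ * σ)) ^ (-(φ * μ * σ) / ((φ * μ + 1) * Q))) :
    StrictMonoOn F (Set.Ioi 0) ∧
    Filter.Tendsto F (nhdsWithin 0 (Set.Ioi 0)) (nhds 0) ∧
    Filter.Tendsto F Filter.atTop (nhds 1) ∧
    ∀ ε ∈ Set.Ioo (0 : ℝ) (1 / 2), ∃! Q : ℝ, 0 < Q ∧ F Q = 2 * ε := by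
  have hc : 0 < φ * μ * σ := by positivity
  have ha : 0 < φ * μ + 1 := by positivity
  have key : ∀ Q : ℝ, 0 < Q →
      F Q = Real.exp (Haux ((φ * μ + 1) * Q / (φ * μ * σ))) := by
    intro Q hQ
    have ht : 0 < (φ * μ + 1) * Q / (φ * μ * σ) := by positivity
    rw [hF Q, ← G_eq ht]
    have hd : φ * μ * σ + (φ * μ + 1) * Q ≠ 0 := by positivity
    have h1 : 1 - φ * μ * σ / (φ * μ * σ + (φ * μ + 1) * Q) =
        ((φ * μ + 1) * Q / (φ * μ * σ)) / (1 + (φ * μ + 1) * Q / (φ * μ * σ)) := by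
      field_simp
      ring
    have h2 : -(φ * μ * σ) / ((φ * μ + 1) * Q) =
        -1 / ((φ * μ + 1) * Q / (φ * μ * σ)) := by
      field_simp
    rw [h1, h2]
  have hmono : StrictMonoOn F (Set.Ioi 0) := by
    intro x hx y hy hxy
    have hx0 : (0:ℝ) < x := hx
    have hy0 : (0:ℝ) < y := hy
    rw [key x hx0, key y hy0]
    apply Real.exp_lt_exp.2
    apply Haux_strictMonoOn (Set.mem_Ioi.2 (by positivity)) (Set.mem_Ioi.2 (by positivity))
    gcongr
  have hcontscale : Continuous fun Q : ℝ => (φ * μ + 1) * Q / (φ * μ * σ) := by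
    continuity
  have h0 : Filter.Tendsto F (nhdsWithin 0 (Set.Ioi 0)) (nhds 0) := by
    have hscale : Tendsto (fun Q : ℝ => (φ * μ + 1) * Q / (φ * μ * σ))
        (𝓝[>] 0) (𝓝[>] 0) := by
      apply tendsto_nhdsWithin_of_tendsto_nhds_of_eventually_within
      · have := hcontscale.tendsto 0
        simpa using this.mono_left nhdsWithin_le_nhds
      · filter_upwards [self_mem_nhdsWithin] with Q hQ
        have hQ0 : (0:ℝ) < Q := hQ
        exact Set.mem_Ioi.2 (by positivity)
    have hG : Tendsto (fun t => Real.exp (Haux t)) (𝓝[>] (0:ℝ)) (𝓝 0) :=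
      Real.tendsto_exp_atBot.comp Haux_tendsto_zero
    refine (hG.comp hscale).congr' ?_
    filter_upwards [self_mem_nhdsWithin] with Q hQ
    exact (key Q hQ).symm
  have htop : Filter.Tendsto F Filter.atTop (nhds 1) := by
    have hscale : Tendsto (fun Q : ℝ => (φ * μ + 1) * Q / (φ * μ * σ)) atTop atTop := by
      apply Tendsto.atTop_div_const hc
      exact Tendsto.const_mul_atTop ha tendsto_id
    have hG : Tendsto (fun t => Real.exp (Haux t)) atTop (𝓝 1) := by
      have := (Real.continuous_exp.tendsto 0).comp Haux_tendsto_atTop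
      simpa [Function.comp_def] using this
    refine (hG.comp hscale).congr' ?_
    filter_upwards [eventually_gt_atTop (0:ℝ)] with Q hQ
    exact (key Q hQ).symm
  refine ⟨hmono, h0, htop, ?_⟩
  rintro ε ⟨hε0, hε2⟩
  have h2ε0 : (0:ℝ) < 2 * ε := by linarith
  have h2ε1 : 2 * ε < 1 := by linarith
  obtain ⟨Q₁, hQ₁lt, hQ₁pos⟩ :=
    ((h0.eventually_lt_const h2ε0).and self_mem_nhdsWithin).exists
  have hQ₁0 : (0:ℝ) < Q₁ := hQ₁pos
  obtain ⟨Q₂, hQ₂gt, hQ₂big⟩ :=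
    ((htop.eventually_const_lt h2ε1).and (eventually_gt_atTop (max Q₁ 0))).exists
  have hQ₂pos : 0 < Q₂ := lt_of_le_of_lt (le_max_right _ _) hQ₂big
  have hQ12 : Q₁ < Q₂ := lt_of_le_of_lt (le_max_left _ _) hQ₂big
  have hcont : ContinuousOn F (Set.Icc Q₁ Q₂) := by
    intro x hx
    have hx0 : 0 < x := lt_of_lt_of_le hQ₁0 hx.1
    apply ContinuousAt.continuousWithinAt
    have hca : ContinuousAt (fun Q : ℝ => Real.exp (Haux ((φ * μ + 1) * Q / (φ * μ * σ)))) x := by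
      apply Real.continuous_exp.continuousAt.comp
      exact ((Haux_hasDerivAt (by positivity)).continuousAt).comp hcontscale.continuousAt
    apply hca.congr
    filter_upwards [eventually_gt_nhds hx0] with Q hQ
    exact (key Q hQ).symm
  have hmem : 2 * ε ∈ Set.Icc (F Q₁) (F Q₂) := ⟨le_of_lt hQ₁lt, le_of_lt hQ₂gt⟩
  obtain ⟨Q, hQmem, hFQ⟩ := intermediate_value_Icc (le_of_lt hQ12) hcont hmem
  have hQpos : 0 < Q := lt_of_lt_of_le hQ₁0 hQmem.1
  refine ⟨Q, ⟨hQpos, hFQ⟩, ?_⟩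
  rintro y ⟨hy, hFy⟩
  exact hmono.injOn (Set.mem_Ioi.2 hy) (Set.mem_Ioi.2 hQpos) (hFy.trans hFQ.symm)
end
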